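/- Let G be a mixed graph with directed and bidirected edges that is ancestral (no directed cycles and no almost directed cycles), and let {G_σ} be a family of mixed graphs such that every path of G appears in some G_σ and every path of every G_σ appears in G. Then every G_σ is ancestral. -/
import Mathlib


/-- If a mixed graph G (directed + bidirected edges) is ancestral
(no directed cycle, no almost directed cycle), and every path/bidirected edge of G
appears in some member of the family {G_σ} and conversely, then every G_σ is ancestral. -/
theorem stmt2 {V S : Type*} (Dir Bi : V → V → Prop) (DirS BiS : S → V → V → Prop)
    (hNoDirCycle : ¬ ∃ a, Relation.TransGen Dir a a)
    (hNoAlmostCycle : ¬ ∃ a b, Bi a b ∧ Relation.TransGen Dir a b)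
    (hPathUp : ∀ s a b, Relation.TransGen (DirS s) a b → Relation.TransGen Dir a b)
    (hPathDown : ∀ a b, Relation.TransGen Dir a b → ∃ s, Relation.TransGen (DirS s) a b)
    (hBiUp : ∀ s a b, BiS s a b → Bi a b)
    (hBiDown : ∀ a b, Bi a b → ∃ s, BiS s a b) :
    ∀ s, (¬ ∃ a, Relation.TransGen (DirS s) a a) ∧
      (¬ ∃ a b, BiS s a b ∧ Relation.TransGen (DirS s) a b) := by
  intro s
  constructor
  · rintro ⟨a, h⟩
    exact hNoDirCycle ⟨a, hPathUp s a a h⟩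
  · rintro ⟨a, b, hb, h⟩
    exact hNoAlmostCycle ⟨a, b, hBiUp s a b hb, hPathUp s a b h⟩
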